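/- Let D ⊆ ℂ be open, s ∈ D, k a positive integer, and F : D → ℂ a function differentiable k times at s with F(s) ≠ 0. Define K = max_{1≤j≤k} ( |F^{(j)}(s)/F(s)| / j! )^{1/j} and N = max_{1≤j≤k} ( |(F'/F)^{(j-1)}(s)| / j! )^{1/j}. Then K/2 ≤ N ≤ 2K. -/

import Mathlib

open Complex Finset Set Topology

private lemma myIteratedDerivWithin_eq {U : Set ℂ} (hU : IsOpen U) {x : ℂ} (hx : x ∈ U)
    (n : ℕ) (f : ℂ → ℂ) : iteratedDerivWithin n f U x = iteratedDeriv n f x := by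
  simp only [iteratedDerivWithin, iteratedDeriv, iteratedFDerivWithin_of_isOpen n hU hx]

private lemma myIteratedDeriv_add {U : Set ℂ} (hU : IsOpen U) {x : ℂ} (hx : x ∈ U)
    {n : ℕ} {f g : ℂ → ℂ} (hf : ContDiffOn ℂ n f U) (hg : ContDiffOn ℂ n g U) :
    iteratedDeriv n (fun z => f z + g z) x = iteratedDeriv n f x + iteratedDeriv n g x := by
  rw [← myIteratedDerivWithin_eq hU hx, ← myIteratedDerivWithin_eq hU hx n f,
    ← myIteratedDerivWithin_eq hU hx n g]
  exact iteratedDerivWithin_add hx hU.uniqueDiffOn (hf x hx) (hg x hx)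

private lemma myPascal (A B : ℕ → ℂ) (n : ℕ) :
    (∑ i ∈ Finset.range (n + 1), (n.choose i : ℂ) * A (i + 1) * B (n - i))
      + ∑ i ∈ Finset.range (n + 1), (n.choose i : ℂ) * A i * B (n - i + 1)
    = ∑ i ∈ Finset.range (n + 2), ((n + 1).choose i : ℂ) * A i * B (n + 1 - i) := by
  have h1 : ∑ i ∈ Finset.range (n + 2), ((n + 1).choose i : ℂ) * A i * B (n + 1 - i)
      = ∑ i ∈ Finset.range (n + 1), ((n + 1).choose (i + 1) : ℂ) * A (i + 1) * B (n - i)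
        + A 0 * B (n + 1) := by
    rw [Finset.sum_range_succ' (fun i => ((n + 1).choose i : ℂ) * A i * B (n + 1 - i))]
    simp [Nat.succ_sub_succ]
  have h5 : ∑ i ∈ Finset.range (n + 1), (n.choose i : ℂ) * A i * B (n - i + 1)
      = ∑ i ∈ Finset.range (n + 1), (n.choose i : ℂ) * A i * B (n + 1 - i) :=
    Finset.sum_congr rfl fun i hi => by
      rw [Nat.succ_sub (Nat.lt_succ_iff.mp (Finset.mem_range.mp hi))]
  have h2 : ∑ i ∈ Finset.range (n + 1), ((n).choose i : ℂ) * A i * B (n + 1 - i)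
      = ∑ i ∈ Finset.range n, ((n).choose (i + 1) : ℂ) * A (i + 1) * B (n - i)
        + A 0 * B (n + 1) := by
    rw [Finset.sum_range_succ' (fun i => ((n).choose i : ℂ) * A i * B (n + 1 - i))]
    simp [Nat.succ_sub_succ]
  have h3 : ∑ i ∈ Finset.range (n + 1), ((n).choose (i + 1) : ℂ) * A (i + 1) * B (n - i)
      = ∑ i ∈ Finset.range n, ((n).choose (i + 1) : ℂ) * A (i + 1) * B (n - i) := by
    rw [Finset.sum_range_succ]; simp
  have h4 : ∀ i ∈ Finset.range (n + 1),
      ((n + 1).choose (i + 1) : ℂ) * A (i + 1) * B (n - i)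
      = (n.choose i : ℂ) * A (i + 1) * B (n - i)
        + (n.choose (i + 1) : ℂ) * A (i + 1) * B (n - i) := by
    intro i _
    rw [Nat.choose_succ_succ]
    push_cast
    ring
  rw [h5, h1, h2, Finset.sum_congr rfl h4, Finset.sum_add_distrib, h3]
  ring

private lemma myLeibniz {U : Set ℂ} (hU : IsOpen U) :
    ∀ (n : ℕ) (f g : ℂ → ℂ), ContDiffOn ℂ n f U → ContDiffOn ℂ n g U → ∀ {x : ℂ}, x ∈ U →
    iteratedDeriv n (fun z => f z * g z) x =
      ∑ i ∈ Finset.range (n + 1),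
        (n.choose i : ℂ) * iteratedDeriv i f x * iteratedDeriv (n - i) g x := by
  intro n
  induction n with
  | zero => intro f g _ _ x hx; simp
  | succ n IH =>
    intro f g hf hg x hx
    have hf' : ContDiffOn ℂ n f U := hf.of_le (by exact_mod_cast Nat.cast_le.2 n.le_succ)
    have hg' : ContDiffOn ℂ n g U := hg.of_le (by exact_mod_cast Nat.cast_le.2 n.le_succ)
    have hdf : ContDiffOn ℂ n (deriv f) U := hf.deriv_of_isOpen hU (by exact_mod_cast le_rfl)
    have hdg : ContDiffOn ℂ n (deriv g) U := hg.deriv_of_isOpen hU (by exact_mod_cast le_rfl)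
    have hder : Set.EqOn (deriv (fun z => f z * g z))
        (fun z => deriv f z * g z + f z * deriv g z) U := by
      intro y hy
      have hfd : DifferentiableAt ℂ f y :=
        (hf.differentiableOn (by simp)
          y hy).differentiableAt (hU.mem_nhds hy)
      have hgd : DifferentiableAt ℂ g y :=
        (hg.differentiableOn (by simp)
          y hy).differentiableAt (hU.mem_nhds hy)
      exact deriv_mul hfd hgd
    calc iteratedDeriv (n + 1) (fun z => f z * g z) x
        = iteratedDeriv n (deriv (fun z => f z * g z)) x := by rw [iteratedDeriv_succ']
      _ = iteratedDeriv n (fun z => deriv f z * g z + f z * deriv g z) x :=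
          hder.iteratedDeriv_of_isOpen hU n hx
      _ = iteratedDeriv n (fun z => deriv f z * g z) x
            + iteratedDeriv n (fun z => f z * deriv g z) x :=
          myIteratedDeriv_add hU hx (hdf.mul hg') (hf'.mul hdg)
      _ = ∑ i ∈ Finset.range (n + 1),
            (n.choose i : ℂ) * iteratedDeriv (i + 1) f x * iteratedDeriv (n - i) g x
          + ∑ i ∈ Finset.range (n + 1),
            (n.choose i : ℂ) * iteratedDeriv i f x * iteratedDeriv (n - i + 1) g x := by
          rw [IH (deriv f) g hdf hg' hx, IH f (deriv g) hf' hdg hx]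
          congr 1
          · exact Finset.sum_congr rfl fun i _ => by rw [← iteratedDeriv_succ']
          · exact Finset.sum_congr rfl fun i _ => by rw [← iteratedDeriv_succ']
      _ = ∑ i ∈ Finset.range (n + 2),
            ((n + 1).choose i : ℂ) * iteratedDeriv i f x * iteratedDeriv (n + 1 - i) g x :=
          myPascal (fun i => iteratedDeriv i f x) (fun j => iteratedDeriv j g x) n

private lemma mySum1 (p : ℕ) :
    ((p : ℝ) + 1) + ∑ m ∈ Finset.Icc 1 p, (m : ℝ) * 2 ^ m ≤ ((p : ℝ) + 1) * 2 ^ (p + 1) := by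
  induction p with
  | zero => simp
  | succ p IH =>
    rw [Finset.sum_Icc_succ_top (by omega : 1 ≤ p + 1) (fun m => (m : ℝ) * 2 ^ m)]
    have h2 : (1 : ℝ) ≤ 2 ^ (p + 1) := one_le_pow₀ (by norm_num)
    have hps : (2 : ℝ) ^ (p + 1 + 1) = 2 * 2 ^ (p + 1) := by rw [pow_succ]; ring
    push_cast
    rw [hps]
    push_cast at IH
    nlinarith [h2]

private lemma mySum2 (p : ℕ) :
    ∑ m ∈ Finset.Icc 1 (p + 1), (m : ℝ) * 2 ^ (p + 1 - m) ≤ ((p : ℝ) + 1) * 2 ^ (p + 1) := by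
  induction p with
  | zero => simp
  | succ p IH =>
    rw [Finset.sum_Icc_succ_top (by omega : 1 ≤ p + 2) (fun m => (m : ℝ) * 2 ^ (p + 2 - m))]
    have hcong : ∑ m ∈ Finset.Icc 1 (p + 1), (m : ℝ) * 2 ^ (p + 2 - m)
        = 2 * ∑ m ∈ Finset.Icc 1 (p + 1), (m : ℝ) * 2 ^ (p + 1 - m) := by
      rw [Finset.mul_sum]
      refine Finset.sum_congr rfl fun m hm => ?_
      have : p + 2 - m = (p + 1 - m) + 1 := by
        have := (Finset.mem_Icc.mp hm).2; omega
      rw [this, pow_succ]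
      ring
    rw [hcong]
    have hpow : (p : ℝ) + 2 ≤ 2 * 2 ^ (p + 1) := by
      have h := (Nat.cast_lt (α := ℝ)).mpr (Nat.lt_two_pow_self (n := p + 2))
      push_cast at h
      rw [pow_succ] at h
      linarith
    have h0 : (0 : ℝ) ≤ 2 ^ (p + 1) := by positivity
    have hps : (2 : ℝ) ^ (p + 1 + 1) = 2 * 2 ^ (p + 1) := by rw [pow_succ]; ring
    have hsub : p - p = 0 := by omega
    push_cast
    rw [hps, hsub, pow_zero]
    nlinarith [IH]

/-- Let `D ⊆ ℂ` be open, `s ∈ D`, `k ≥ 1`, and `F` differentiable `k` times at `s` with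
`F s ≠ 0`. With `K = max_{1≤j≤k} (|F^{(j)}(s)/F(s)|/j!)^{1/j}` and
`N = max_{1≤j≤k} (|(F'/F)^{(j-1)}(s)|/j!)^{1/j}`, one has `K/2 ≤ N ≤ 2K`. -/
theorem stmt4 (k : ℕ) (hk : 1 ≤ k) (D : Set ℂ) (hD : IsOpen D) (s : ℂ) (hs : s ∈ D)
    (F : ℂ → ℂ) (hF : ContDiffAt ℂ k F s) (hFs : F s ≠ 0)
    (K N : ℝ)
    (hK : K = (Finset.Icc 1 k).sup' (Finset.nonempty_Icc.mpr hk)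
      (fun j => (‖iteratedDeriv j F s / F s‖ / (j.factorial : ℝ)) ^ ((1 : ℝ) / j)))
    (hN : N = (Finset.Icc 1 k).sup' (Finset.nonempty_Icc.mpr hk)
      (fun j => (‖iteratedDeriv (j - 1) (fun z => deriv F z / F z) s‖ / (j.factorial : ℝ))
        ^ ((1 : ℝ) / j))) :
    K / 2 ≤ N ∧ N ≤ 2 * K := by
  -- a good open neighborhood
  obtain ⟨u, huo, hsu, hFu⟩ := hF.contDiffOn' le_rfl (by simp)
  rw [Set.insert_eq_of_mem (Set.mem_univ s), Set.univ_inter] at hFu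
  obtain ⟨v, hvne, hvo, hsv⟩ := eventually_nhds_iff.mp (hF.continuousAt.eventually_ne hFs)
  set U : Set ℂ := u ∩ v with hU
  have hUo : IsOpen U := huo.inter hvo
  have hsU : s ∈ U := ⟨hsu, hsv⟩
  have hne : ∀ z ∈ U, F z ≠ 0 := fun z hz => hvne z hz.2
  have hFU : ContDiffOn ℂ k F U := hFu.mono Set.inter_subset_left
  set g : ℂ → ℂ := fun z => deriv F z / F z with hgdef
  have hgU : ContDiffOn ℂ (k - 1 : ℕ) g U := by
    refine ContDiffOn.div ?_ (hFU.of_le ?_) hne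
    · exact hFU.deriv_of_isOpen hUo (by exact_mod_cast (by omega : k - 1 + 1 ≤ k))
    · exact_mod_cast Nat.cast_le.2 (by omega : k - 1 ≤ k)
  set α : ℕ → ℂ := fun n => iteratedDeriv n F s / F s / (n.factorial : ℂ) with hαdef
  set β : ℕ → ℂ := fun m => iteratedDeriv (m - 1) g s / ((m - 1).factorial : ℂ) with hβdef
  have hα0 : α 0 = 1 := by simp [hαdef, div_self hFs]
  -- the recurrence
  have hrec : ∀ n : ℕ, 1 ≤ n → n ≤ k →
      (n : ℂ) * α n = ∑ m ∈ Finset.Icc 1 n, β m * α (n - m) := by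
    intro n h1 h2
    obtain ⟨p, rfl⟩ : ∃ p, n = p + 1 := ⟨n - 1, by omega⟩
    have hgp : ContDiffOn ℂ p g U := hgU.of_le (by exact_mod_cast Nat.cast_le.2 (by omega : p ≤ k - 1))
    have hFp : ContDiffOn ℂ p F U := hFU.of_le (by exact_mod_cast Nat.cast_le.2 (by omega : p ≤ k))
    have hEq : Set.EqOn (deriv F) (fun z => g z * F z) U := fun y hy =>
      (div_mul_cancel₀ (deriv F y) (hne y hy)).symm
    have hL : iteratedDeriv (p + 1) F s
        = ∑ i ∈ Finset.range (p + 1),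
            (p.choose i : ℂ) * iteratedDeriv i g s * iteratedDeriv (p - i) F s := by
      rw [iteratedDeriv_succ', hEq.iteratedDeriv_of_isOpen hUo p hsU]
      exact myLeibniz hUo p g F hgp hFp hsU
    have hre : ∑ m ∈ Finset.Icc 1 (p + 1), β m * α (p + 1 - m)
        = ∑ i ∈ Finset.range (p + 1), β (1 + i) * α (p + 1 - (1 + i)) := by
      rw [← Finset.Ico_add_one_right_eq_Icc, Finset.sum_Ico_eq_sum_range]
      simp
    rw [hre]
    have hterm : ∀ i ∈ Finset.range (p + 1),
        β (1 + i) * α (p + 1 - (1 + i))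
        = ((p + 1 : ℕ) : ℂ) *
            ((p.choose i : ℂ) * iteratedDeriv i g s * iteratedDeriv (p - i) F s / F s
              / ((p + 1).factorial : ℂ)) := by
      intro i hi
      have hip : i ≤ p := Nat.lt_succ_iff.mp (Finset.mem_range.mp hi)
      have e1 : (1 + i) - 1 = i := by omega
      have e2 : p + 1 - (1 + i) = p - i := by omega
      have hc : ((p.choose i : ℕ) : ℂ) * (i.factorial : ℂ) * ((p - i).factorial : ℂ)
          = (p.factorial : ℂ) := by
        exact_mod_cast congrArg (Nat.cast : ℕ → ℂ)
          (Nat.choose_mul_factorial_mul_factorial hip)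
      have hfac : (((p + 1).factorial : ℕ) : ℂ) = ((p + 1 : ℕ) : ℂ) * (p.factorial : ℂ) := by
        exact_mod_cast congrArg (Nat.cast : ℕ → ℂ) (Nat.factorial_succ p)
      simp only [hβdef, hαdef, e1, e2]
      have hif : (i.factorial : ℂ) ≠ 0 := Nat.cast_ne_zero.mpr i.factorial_ne_zero
      have hpf : ((p - i).factorial : ℂ) ≠ 0 := Nat.cast_ne_zero.mpr (p - i).factorial_ne_zero
      have hp1 : ((p + 1 : ℕ) : ℂ) ≠ 0 := Nat.cast_ne_zero.mpr (by omega)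
      have hpf' : (p.factorial : ℂ) ≠ 0 := Nat.cast_ne_zero.mpr p.factorial_ne_zero
      have hp1f : (((p + 1).factorial : ℕ) : ℂ) ≠ 0 := Nat.cast_ne_zero.mpr (p + 1).factorial_ne_zero
      field_simp
      push_cast
      push_cast at hc hfac
      linear_combination (iteratedDeriv i g s * iteratedDeriv (p - i) F s) * hfac
        - (((p : ℂ) + 1) * (iteratedDeriv i g s * iteratedDeriv (p - i) F s)) * hc
    rw [Finset.sum_congr rfl hterm, ← Finset.mul_sum]
    congr 1
    simp only [hαdef]
    rw [hL, Finset.sum_div, Finset.sum_div]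
  -- norms
  have hαnorm : ∀ n : ℕ, ‖α n‖ = ‖iteratedDeriv n F s / F s‖ / (n.factorial : ℝ) := by
    intro n
    simp [hαdef, norm_div]
  have hβnorm : ∀ m : ℕ, ‖β m‖ = ‖iteratedDeriv (m - 1) g s‖ / ((m - 1).factorial : ℝ) := by
    intro m
    simp [hβdef, norm_div]
  have hK0 : 0 ≤ K := by
    have h := Finset.le_sup' (fun j : ℕ =>
        (‖iteratedDeriv j F s / F s‖ / (j.factorial : ℝ)) ^ ((1 : ℝ) / j))
      (Finset.mem_Icc.mpr ⟨hk, le_rfl⟩)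
    rw [hK]
    exact le_trans (Real.rpow_nonneg (by positivity) _) h
  have hN0 : 0 ≤ N := by
    have h := Finset.le_sup' (fun j : ℕ =>
        (‖iteratedDeriv (j - 1) g s‖ / (j.factorial : ℝ)) ^ ((1 : ℝ) / j))
      (Finset.mem_Icc.mpr ⟨hk, le_rfl⟩)
    rw [hN]
    exact le_trans (Real.rpow_nonneg (by positivity) _) h
  have hαK : ∀ j : ℕ, 1 ≤ j → j ≤ k → ‖α j‖ ≤ K ^ j := by
    intro j h1 h2
    have hj : (‖iteratedDeriv j F s / F s‖ / (j.factorial : ℝ)) ^ ((1 : ℝ) / j) ≤ K := by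
      rw [hK]
      exact Finset.le_sup' (fun j : ℕ =>
          (‖iteratedDeriv j F s / F s‖ / (j.factorial : ℝ)) ^ ((1 : ℝ) / j))
        (Finset.mem_Icc.mpr ⟨h1, h2⟩)
    set x : ℝ := ‖iteratedDeriv j F s / F s‖ / (j.factorial : ℝ) with hxdef
    have hx0 : 0 ≤ x := by positivity
    rw [hαnorm j, ← hxdef]
    calc x = (x ^ ((1 : ℝ) / j)) ^ j := by
            rw [one_div, Real.rpow_inv_natCast_pow hx0 (by omega)]
      _ ≤ K ^ j := pow_le_pow_left₀ (Real.rpow_nonneg hx0 _) hj j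
  have hβN : ∀ j : ℕ, 1 ≤ j → j ≤ k → ‖β j‖ ≤ (j : ℝ) * N ^ j := by
    intro j h1 h2
    have hj : (‖iteratedDeriv (j - 1) g s‖ / (j.factorial : ℝ)) ^ ((1 : ℝ) / j) ≤ N := by
      rw [hN]
      exact Finset.le_sup' (fun j : ℕ =>
          (‖iteratedDeriv (j - 1) g s‖ / (j.factorial : ℝ)) ^ ((1 : ℝ) / j))
        (Finset.mem_Icc.mpr ⟨h1, h2⟩)
    set y : ℝ := ‖iteratedDeriv (j - 1) g s‖ / (j.factorial : ℝ) with hydef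
    have hy0 : 0 ≤ y := by positivity
    have hyN : y ≤ N ^ j := by
      calc y = (y ^ ((1 : ℝ) / j)) ^ j := by
              rw [one_div, Real.rpow_inv_natCast_pow hy0 (by omega)]
        _ ≤ N ^ j := pow_le_pow_left₀ (Real.rpow_nonneg hy0 _) hj j
    have hfac : (j : ℝ) * ((j - 1).factorial : ℝ) = (j.factorial : ℝ) := by
      exact_mod_cast congrArg (Nat.cast : ℕ → ℝ) (Nat.mul_factorial_pred (by omega))
    have heq : ‖β j‖ = (j : ℝ) * y := by
      rw [hβnorm j, hydef, ← hfac]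
      have : ((j - 1).factorial : ℝ) ≠ 0 := Nat.cast_ne_zero.mpr (j - 1).factorial_ne_zero
      have hj0 : (j : ℝ) ≠ 0 := Nat.cast_ne_zero.mpr (by omega)
      field_simp
    rw [heq]
    exact mul_le_mul_of_nonneg_left hyN (by positivity)
  -- β is bounded by K
  have hβ2K : ∀ n : ℕ, 1 ≤ n → n ≤ k → ‖β n‖ ≤ (n : ℝ) * (2 * K) ^ n := by
    intro n
    induction n using Nat.strong_induction_on with
    | _ n IH =>
      intro h1 h2
      have hn' : n - 1 + 1 = n := by omega
      have hsplit : ∑ m ∈ Finset.Icc 1 n, β m * α (n - m)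
          = (∑ m ∈ Finset.Icc 1 (n - 1), β m * α (n - m)) + β n := by
        conv_lhs => rw [← hn']
        rw [Finset.sum_Icc_succ_top (by omega : 1 ≤ n - 1 + 1) (fun m => β m * α (n - 1 + 1 - m))]
        rw [hn']
        congr 1
        rw [Nat.sub_self, hα0, mul_one]
      have hβeq : β n = (n : ℂ) * α n - ∑ m ∈ Finset.Icc 1 (n - 1), β m * α (n - m) := by
        have h := hrec n h1 h2
        rw [hsplit] at h
        linear_combination -h
      have hb1 : ‖β n‖ ≤ (n : ℝ) * ‖α n‖ + ∑ m ∈ Finset.Icc 1 (n - 1), ‖β m‖ * ‖α (n - m)‖ := by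
        rw [hβeq]
        refine le_trans (norm_sub_le _ _) ?_
        gcongr
        · rw [norm_mul, Complex.norm_natCast]
        · exact le_trans (norm_sum_le _ _) (le_of_eq (Finset.sum_congr rfl fun m _ => norm_mul _ _))
      have hb2 : ∑ m ∈ Finset.Icc 1 (n - 1), ‖β m‖ * ‖α (n - m)‖
          ≤ ∑ m ∈ Finset.Icc 1 (n - 1), ((m : ℝ) * 2 ^ m) * K ^ n := by
        refine Finset.sum_le_sum fun m hm => ?_
        obtain ⟨hm1, hm2⟩ := Finset.mem_Icc.mp hm
        have hmn : m < n := by omega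
        have hKn : K ^ m * K ^ (n - m) = K ^ n := by
          rw [← pow_add]; congr 1; omega
        calc ‖β m‖ * ‖α (n - m)‖
            ≤ ((m : ℝ) * (2 * K) ^ m) * K ^ (n - m) := by
              refine mul_le_mul (IH m hmn hm1 (by omega)) (hαK (n - m) (by omega) (by omega))
                (norm_nonneg _) (by positivity)
          _ = ((m : ℝ) * 2 ^ m) * K ^ n := by
              rw [mul_pow, ← hKn]; ring
      have hb3 : (n : ℝ) * ‖α n‖ ≤ (n : ℝ) * K ^ n :=
        mul_le_mul_of_nonneg_left (hαK n h1 h2) (by positivity)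
      have hb4 : ((n : ℝ) + ∑ m ∈ Finset.Icc 1 (n - 1), (m : ℝ) * 2 ^ m) ≤ (n : ℝ) * 2 ^ n := by
        have := mySum1 (n - 1)
        rw [hn'] at this
        have hcast : ((n - 1 : ℕ) : ℝ) + 1 = (n : ℝ) := by
          have : ((n - 1 : ℕ) : ℝ) = (n : ℝ) - 1 := by
            have := hn'
            push_cast [Nat.cast_sub (by omega : 1 ≤ n)]
            ring
          rw [this]; ring
        rw [hcast] at this
        exact this
      calc ‖β n‖ ≤ (n : ℝ) * K ^ n + ∑ m ∈ Finset.Icc 1 (n - 1), ((m : ℝ) * 2 ^ m) * K ^ n :=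
            le_trans hb1 (by linarith [hb2, hb3])
        _ = ((n : ℝ) + ∑ m ∈ Finset.Icc 1 (n - 1), (m : ℝ) * 2 ^ m) * K ^ n := by
            rw [add_mul, ← Finset.sum_mul]
        _ ≤ ((n : ℝ) * 2 ^ n) * K ^ n :=
            mul_le_mul_of_nonneg_right hb4 (by positivity)
        _ = (n : ℝ) * (2 * K) ^ n := by rw [mul_pow]; ring
  -- α is bounded by N
  have hα2N : ∀ n : ℕ, n ≤ k → ‖α n‖ ≤ (2 * N) ^ n := by
    intro n
    induction n using Nat.strong_induction_on with
    | _ n IH =>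
      intro h2
      rcases Nat.eq_zero_or_pos n with rfl | h1
      · rw [hα0]; simp
      have hb1 : (n : ℝ) * ‖α n‖ ≤ ∑ m ∈ Finset.Icc 1 n, ‖β m‖ * ‖α (n - m)‖ := by
        have h := hrec n h1 h2
        calc (n : ℝ) * ‖α n‖ = ‖(n : ℂ) * α n‖ := by rw [norm_mul, Complex.norm_natCast]
          _ = ‖∑ m ∈ Finset.Icc 1 n, β m * α (n - m)‖ := by rw [h]
          _ ≤ ∑ m ∈ Finset.Icc 1 n, ‖β m‖ * ‖α (n - m)‖ :=
              le_trans (norm_sum_le _ _)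
                (le_of_eq (Finset.sum_congr rfl fun m _ => norm_mul _ _))
      have hb2 : ∑ m ∈ Finset.Icc 1 n, ‖β m‖ * ‖α (n - m)‖
          ≤ ∑ m ∈ Finset.Icc 1 n, ((m : ℝ) * 2 ^ (n - m)) * N ^ n := by
        refine Finset.sum_le_sum fun m hm => ?_
        obtain ⟨hm1, hm2⟩ := Finset.mem_Icc.mp hm
        have hNn : N ^ m * N ^ (n - m) = N ^ n := by
          rw [← pow_add]; congr 1; omega
        calc ‖β m‖ * ‖α (n - m)‖
            ≤ ((m : ℝ) * N ^ m) * (2 * N) ^ (n - m) := by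
              refine mul_le_mul (hβN m hm1 (by omega))
                (IH (n - m) (by omega) (by omega)) (norm_nonneg _) (by positivity)
          _ = ((m : ℝ) * 2 ^ (n - m)) * N ^ n := by
              rw [mul_pow, ← hNn]; ring
      have hb4 : ∑ m ∈ Finset.Icc 1 n, (m : ℝ) * 2 ^ (n - m) ≤ (n : ℝ) * 2 ^ n := by
        obtain ⟨p, rfl⟩ : ∃ p, n = p + 1 := ⟨n - 1, by omega⟩
        have := mySum2 p
        push_cast at this ⊢
        linarith
      have hfin : (n : ℝ) * ‖α n‖ ≤ (n : ℝ) * (2 * N) ^ n := by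
        calc (n : ℝ) * ‖α n‖ ≤ ∑ m ∈ Finset.Icc 1 n, ((m : ℝ) * 2 ^ (n - m)) * N ^ n :=
              le_trans hb1 hb2
          _ = (∑ m ∈ Finset.Icc 1 n, (m : ℝ) * 2 ^ (n - m)) * N ^ n := by
              rw [← Finset.sum_mul]
          _ ≤ ((n : ℝ) * 2 ^ n) * N ^ n := mul_le_mul_of_nonneg_right hb4 (by positivity)
          _ = (n : ℝ) * (2 * N) ^ n := by rw [mul_pow]; ring
      have hn0 : (0 : ℝ) < n := by exact_mod_cast h1
      exact le_of_mul_le_mul_left hfin hn0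
  -- final bounds
  have hN2K : N ≤ 2 * K := by
    rw [hN]
    refine Finset.sup'_le _ _ fun j hj => ?_
    obtain ⟨h1, h2⟩ := Finset.mem_Icc.mp hj
    have hfac : (j : ℝ) * ((j - 1).factorial : ℝ) = (j.factorial : ℝ) := by
      exact_mod_cast congrArg (Nat.cast : ℕ → ℝ) (Nat.mul_factorial_pred (by omega))
    have hj0 : (0 : ℝ) < j := by exact_mod_cast (by omega : 0 < j)
    have hb : ‖iteratedDeriv (j - 1) g s‖ / (j.factorial : ℝ) ≤ (2 * K) ^ j := by
      have h := hβ2K j h1 h2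
      rw [hβnorm j] at h
      rw [div_le_iff₀ (by positivity : (0 : ℝ) < (j.factorial : ℝ))]
      rw [div_le_iff₀ (by positivity : (0 : ℝ) < ((j - 1).factorial : ℝ))] at h
      calc ‖iteratedDeriv (j - 1) g s‖ ≤ (j : ℝ) * (2 * K) ^ j * ((j - 1).factorial : ℝ) := h
        _ = (2 * K) ^ j * ((j : ℝ) * ((j - 1).factorial : ℝ)) := by ring
        _ = (2 * K) ^ j * (j.factorial : ℝ) := by rw [hfac]
    calc (‖iteratedDeriv (j - 1) g s‖ / (j.factorial : ℝ)) ^ ((1 : ℝ) / j)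
        ≤ ((2 * K) ^ j) ^ ((1 : ℝ) / j) :=
          Real.rpow_le_rpow (by positivity) hb (by positivity)
      _ = 2 * K := by
          rw [one_div, Real.pow_rpow_inv_natCast (by linarith) (by omega)]
  have hK2N : K ≤ 2 * N := by
    rw [hK]
    refine Finset.sup'_le _ _ fun j hj => ?_
    obtain ⟨h1, h2⟩ := Finset.mem_Icc.mp hj
    have hb : ‖iteratedDeriv j F s / F s‖ / (j.factorial : ℝ) ≤ (2 * N) ^ j := by
      rw [← hαnorm j]
      exact hα2N j h2
    calc (‖iteratedDeriv j F s / F s‖ / (j.factorial : ℝ)) ^ ((1 : ℝ) / j)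
        ≤ ((2 * N) ^ j) ^ ((1 : ℝ) / j) :=
          Real.rpow_le_rpow (by positivity) hb (by positivity)
      _ = 2 * N := by
          rw [one_div, Real.pow_rpow_inv_natCast (by linarith) (by omega)]
  exact ⟨by linarith, hN2K⟩
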